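/- For every integer N ≥ 2, every σ > 0, and all indices 1 ≤ k, l ≤ N, the second moments of the density p_{N,σ} are given by ∫_{ℝ^N} x_k x_l p_{N,σ}(x) dx = 1 + (σ^2 - 1)/N when k = l, and ∫_{ℝ^N} x_k x_l p_{N,σ}(x) dx = (σ^2 - 1)/N when k ≠ l. -/

import Mathlib

open MeasureTheory Real Finset Filter

/-- The `N`-variate normal density
`p_{N,σ}(x) = σ⁻¹ (2π)^{-N/2} ∏_{k<l} exp(-(1/(2N))(1-σ⁻²)(x_k-x_l)²) ∏_n exp(-x_n²/(2σ²))`. -/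
noncomputable def pdensity (N : ℕ) (σ : ℝ) (x : Fin N → ℝ) : ℝ :=
  σ⁻¹ * (2 * π) ^ (-(N : ℝ) / 2) *
    (∏ k : Fin N, ∏ l ∈ Finset.univ.filter (fun l => k < l),
      Real.exp (-(1 / (2 * (N : ℝ))) * (1 - (σ ^ 2)⁻¹) * (x k - x l) ^ 2)) *
    ∏ n : Fin N, Real.exp (-(x n) ^ 2 / (2 * σ ^ 2))


lemma intg0 : Integrable (fun u : ℝ => Real.exp (-u^2/2)) := by
  have h := integrable_exp_neg_mul_sq (show (0:ℝ) < 1/2 by norm_num)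
  have : (fun u : ℝ => Real.exp (-u^2/2)) = fun u : ℝ => Real.exp (-(1/2) * u^2) := by
    funext u; congr 1; ring
  rw [this]; exact h

lemma intg1 : Integrable (fun u : ℝ => u * Real.exp (-u^2/2)) := by
  have h := integrable_mul_exp_neg_mul_sq (show (0:ℝ) < 1/2 by norm_num)
  have : (fun u : ℝ => u * Real.exp (-u^2/2)) = fun u : ℝ => u * Real.exp (-(1/2) * u^2) := by
    funext u; congr 2; ring
  rw [this]; exact h

lemma intg2 : Integrable (fun u : ℝ => u^2 * Real.exp (-u^2/2)) := by
  have h := integrable_rpow_mul_exp_neg_mul_sq (show (0:ℝ) < 1/2 by norm_num)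
    (show (-1:ℝ) < 2 by norm_num)
  have : (fun u : ℝ => u^2 * Real.exp (-u^2/2)) = fun u : ℝ => u ^ (2:ℝ) * Real.exp (-(1/2) * u^2) := by
    funext u
    rw [show ((2:ℝ)) = ((2:ℕ):ℝ) by norm_num, Real.rpow_natCast]
    congr 2; ring
  rw [this]; exact h

lemma I0 : ∫ u : ℝ, Real.exp (-u^2/2) = Real.sqrt (2*π) := by
  have h := integral_gaussian (1/2 : ℝ)
  have e : (fun u : ℝ => Real.exp (-u^2/2)) = fun u : ℝ => Real.exp (-(1/2) * u^2) := by
    funext u; congr 1; ring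
  rw [e, h, show π / (1/2:ℝ) = 2*π by ring]

lemma I1 : ∫ u : ℝ, u * Real.exp (-u^2/2) = 0 := by
  have hderiv : ∀ x : ℝ, HasDerivAt (fun x : ℝ => -Real.exp (-x^2/2)) (x * Real.exp (-x^2/2)) x := by
    intro x
    have h1 : HasDerivAt (fun x : ℝ => -x^2/2) (-x) x := by
      have := (hasDerivAt_pow 2 x).div_const 2
      have h2 := this.fun_neg
      rw [show (fun x : ℝ => -x^2/2) = fun x => -(x^2/2) from by funext y; ring]; refine h2.congr_deriv ?_
      · push_cast; ring
    have h2 := (h1.exp).fun_neg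
    refine h2.congr_deriv ?_; ring
  exact integral_eq_zero_of_hasDerivAt_of_integrable hderiv intg1 intg0.neg

lemma I2 : ∫ u : ℝ, u^2 * Real.exp (-u^2/2) = Real.sqrt (2*π) := by
  have hderiv : ∀ x : ℝ, HasDerivAt (fun x : ℝ => -x * Real.exp (-x^2/2))
      (-Real.exp (-x^2/2) + x^2 * Real.exp (-x^2/2)) x := by
    intro x
    have h1 : HasDerivAt (fun x : ℝ => -x^2/2) (-x) x := by
      have := ((hasDerivAt_pow 2 x).div_const 2).fun_neg
      rw [show (fun x : ℝ => -x^2/2) = fun x => -(x^2/2) from by funext y; ring]; refine this.congr_deriv ?_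
      · push_cast; ring
    have h2 := (hasDerivAt_id x).fun_neg.mul h1.exp
    refine h2.congr_deriv ?_; simp only [id_eq]; ring
  have hint : Integrable (fun x : ℝ => -Real.exp (-x^2/2) + x^2 * Real.exp (-x^2/2)) :=
    intg0.neg.add intg2
  have hf : Integrable (fun x : ℝ => -x * Real.exp (-x^2/2)) := by
    have heq : (fun x : ℝ => -x * Real.exp (-x^2/2)) = fun x : ℝ => -(x * Real.exp (-x^2/2)) := by
      funext x; ring
    rw [heq]; exact intg1.neg
  have h0 := integral_eq_zero_of_hasDerivAt_of_integrable hderiv hint hf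
  have heq2 : (fun x : ℝ => -Real.exp (-x^2/2) + x^2 * Real.exp (-x^2/2))
      = fun x : ℝ => x^2 * Real.exp (-x^2/2) - Real.exp (-x^2/2) := by funext x; ring
  rw [heq2] at h0
  rw [integral_sub intg2 intg0, I0] at h0
  linarith


lemma G_eq_prod {N : ℕ} (a b : Fin N) (z : Fin N → ℝ) :
    z a * z b * ∏ n, Real.exp (-(z n)^2/2)
      = ∏ n, ((if n = a then z n else 1) * (if n = b then z n else 1) * Real.exp (-(z n)^2/2)) := by
  rw [Finset.prod_mul_distrib, Finset.prod_mul_distrib]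
  simp

lemma integrable_G {N : ℕ} (a b : Fin N) :
    Integrable (fun z : Fin N → ℝ => z a * z b * ∏ n, Real.exp (-(z n)^2/2)) := by
  have h : (fun z : Fin N → ℝ => z a * z b * ∏ n, Real.exp (-(z n)^2/2))
      = fun z : Fin N → ℝ => ∏ n, ((fun (n : Fin N) (u : ℝ) =>
          (if n = a then u else 1) * (if n = b then u else 1) * Real.exp (-u^2/2)) n (z n)) := by
    funext z; exact G_eq_prod a b z
  rw [h]
  refine Integrable.fintype_prod (f := fun (n : Fin N) (u : ℝ) =>
    (if n = a then u else 1) * (if n = b then u else 1) * Real.exp (-u^2/2)) (fun n => ?_)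
  by_cases ha : n = a <;> by_cases hb : n = b
  · simp only [if_pos ha, if_pos hb]
    have e2 : (fun u : ℝ => u * u * Real.exp (-u^2/2)) = fun u : ℝ => u^2 * Real.exp (-u^2/2) := by
      funext u; ring
    rw [e2]; exact intg2
  · simp only [if_pos ha, if_neg hb, mul_one]
    exact intg1
  · simp only [if_neg ha, if_pos hb, one_mul]
    exact intg1
  · simp only [if_neg ha, if_neg hb, one_mul, mul_one]
    exact intg0

lemma integral_G {N : ℕ} (a b : Fin N) :
    (∫ z : Fin N → ℝ, z a * z b * ∏ n, Real.exp (-(z n)^2/2))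
      = if a = b then Real.sqrt (2*π) ^ N else 0 := by
  have h : (fun z : Fin N → ℝ => z a * z b * ∏ n, Real.exp (-(z n)^2/2))
      = fun z : Fin N → ℝ => ∏ n, ((fun (n : Fin N) (u : ℝ) =>
          (if n = a then u else 1) * (if n = b then u else 1) * Real.exp (-u^2/2)) n (z n)) := by
    funext z; exact G_eq_prod a b z
  rw [show (∫ z : Fin N → ℝ, z a * z b * ∏ n, Real.exp (-(z n)^2/2))
      = ∫ z : Fin N → ℝ, ∏ n, ((fun (n : Fin N) (u : ℝ) =>
          (if n = a then u else 1) * (if n = b then u else 1) * Real.exp (-u^2/2)) n (z n)) from by rw [h]]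
  rw [MeasureTheory.integral_fintype_prod_volume_eq_prod (ι := Fin N) (f := fun (n : Fin N) (u : ℝ) =>
    (if n = a then u else 1) * (if n = b then u else 1) * Real.exp (-u^2/2))]
  by_cases hab : a = b
  · subst hab
    rw [if_pos rfl]
    have : ∀ n : Fin N, (∫ u : ℝ, (if n = a then u else 1) * (if n = a then u else 1) * Real.exp (-u^2/2))
        = Real.sqrt (2*π) := by
      intro n
      by_cases ha : n = a
      · simp only [if_pos ha]
        have e2 : (fun u : ℝ => u * u * Real.exp (-u^2/2)) = fun u : ℝ => u^2 * Real.exp (-u^2/2) := by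
          funext u; ring
        rw [e2]; exact I2
      · simp only [if_neg ha, one_mul, mul_one]
        exact I0
    rw [Finset.prod_congr rfl (fun n _ => this n), Finset.prod_const, Finset.card_univ,
      Fintype.card_fin]
  · rw [if_neg hab]
    apply Finset.prod_eq_zero (Finset.mem_univ a)
    simp only [if_pos rfl, if_neg hab, mul_one]
    exact I1


lemma double_sum_sq {N : ℕ} (x : Fin N → ℝ) :
    (∑ k : Fin N, ∑ l ∈ Finset.univ.filter (fun l => k < l), (x k - x l)^2)
      = N * (∑ n, (x n)^2) - (∑ n, x n)^2 := by
  have hA : (∑ k : Fin N, ∑ l : Fin N, (x k - x l)^2)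
      = 2 * ((N : ℝ) * (∑ n, (x n)^2)) - 2 * (∑ n, x n)^2 := by
    have h1 : ∀ k : Fin N, (∑ l : Fin N, (x k - x l)^2)
        = (N : ℝ) * (x k)^2 - 2 * (x k * ∑ l, x l) + ∑ l, (x l)^2 := by
      intro k
      have : ∀ l : Fin N, (x k - x l)^2 = (x k)^2 - 2 * x k * x l + (x l)^2 := fun l => by ring
      rw [Finset.sum_congr rfl (fun l _ => this l), Finset.sum_add_distrib,
        Finset.sum_sub_distrib, Finset.sum_const, Finset.card_univ, Fintype.card_fin,
        nsmul_eq_mul, ← Finset.mul_sum]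
      ring_nf
    have h2 : (∑ i : Fin N, 2 * (x i * ∑ l : Fin N, x l))
        = (∑ i : Fin N, x i) * (2 * ∑ l : Fin N, x l) := by
      have hp : ∀ i : Fin N, 2 * (x i * ∑ l : Fin N, x l) = x i * (2 * ∑ l : Fin N, x l) :=
        fun i => by ring
      rw [Finset.sum_congr rfl fun i _ => hp i, ← Finset.sum_mul]
    rw [Finset.sum_congr rfl (fun k _ => h1 k), Finset.sum_add_distrib, Finset.sum_sub_distrib,
      Finset.sum_const, Finset.card_univ, Fintype.card_fin, nsmul_eq_mul, ← Finset.mul_sum, h2]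
    ring
  have hsplit : ∀ k : Fin N, (∑ l : Fin N, (x k - x l)^2)
      = (∑ l ∈ Finset.univ.filter (fun l => k < l), (x k - x l)^2)
        + ∑ l ∈ Finset.univ.filter (fun l => l < k), (x k - x l)^2 := by
    intro k
    rw [← Finset.sum_filter_add_sum_filter_not Finset.univ (fun l => k < l)]
    congr 1
    refine (Finset.sum_subset ?_ ?_).symm
    · intro l hl
      simp only [Finset.mem_filter, Finset.mem_univ, true_and] at hl ⊢
      exact not_lt_of_gt hl
    · intro l hl hnl
      simp only [Finset.mem_filter, Finset.mem_univ, true_and, not_lt] at hl hnl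
      have : l = k := le_antisymm hl hnl
      rw [this]; ring
  have hC : (∑ k : Fin N, ∑ l ∈ Finset.univ.filter (fun l => l < k), (x k - x l)^2)
      = ∑ k : Fin N, ∑ l ∈ Finset.univ.filter (fun l => k < l), (x k - x l)^2 := by
    rw [Finset.sum_comm' (t' := Finset.univ) (s' := fun l => Finset.univ.filter (fun k => l < k))]
    · refine Finset.sum_congr rfl (fun l _ => Finset.sum_congr rfl (fun k hk => by ring))
    · intro k l
      simp only [Finset.mem_univ, Finset.mem_filter, true_and, and_comm]
  have := hA
  rw [Finset.sum_congr rfl (fun k _ => hsplit k), Finset.sum_add_distrib, hC] at this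
  linarith


lemma pdensity_exp {N : ℕ} {σ : ℝ} (hN : (N:ℝ) ≠ 0) (hσ : σ ≠ 0) (x : Fin N → ℝ) :
    pdensity N σ x = σ⁻¹ * (2 * π) ^ (-(N : ℝ) / 2) *
      Real.exp (-(1/2) * (∑ n, (x n)^2) + (1 - (σ^2)⁻¹) / (2 * N) * (∑ n, x n)^2) := by
  rw [pdensity]
  have h1 : (∏ k : Fin N, ∏ l ∈ Finset.univ.filter (fun l => k < l),
      Real.exp (-(1 / (2 * (N : ℝ))) * (1 - (σ ^ 2)⁻¹) * (x k - x l) ^ 2))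
      = Real.exp (∑ k : Fin N, ∑ l ∈ Finset.univ.filter (fun l => k < l),
          -(1 / (2 * (N : ℝ))) * (1 - (σ ^ 2)⁻¹) * (x k - x l) ^ 2) := by
    rw [Real.exp_sum]
    exact Finset.prod_congr rfl fun k _ => (Real.exp_sum _ _).symm
  have h2 : (∏ n : Fin N, Real.exp (-(x n) ^ 2 / (2 * σ ^ 2)))
      = Real.exp (∑ n : Fin N, -(x n) ^ 2 / (2 * σ ^ 2)) := (Real.exp_sum _ _).symm
  rw [h1, h2, mul_assoc, ← Real.exp_add]
  congr 1
  have h3 : (∑ k : Fin N, ∑ l ∈ Finset.univ.filter (fun l => k < l),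
      -(1 / (2 * (N : ℝ))) * (1 - (σ ^ 2)⁻¹) * (x k - x l) ^ 2)
      = -(1 / (2 * (N : ℝ))) * (1 - (σ ^ 2)⁻¹) *
          (N * (∑ n, (x n)^2) - (∑ n, x n)^2) := by
    rw [← double_sum_sq x, Finset.mul_sum]
    exact Finset.sum_congr rfl fun k _ => by rw [Finset.mul_sum]
  have h4 : (∑ n : Fin N, -(x n) ^ 2 / (2 * σ ^ 2)) = -(∑ n, (x n)^2) / (2 * σ^2) := by
    rw [← Finset.sum_div, Finset.sum_neg_distrib]
  rw [h3, h4]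
  field_simp
  ring

lemma pdensity_comp {N : ℕ} {σ : ℝ} (hN : (N:ℝ) ≠ 0) (hσ : σ ≠ 0) (z : Fin N → ℝ) :
    pdensity N σ (fun i => z i + (σ-1)/N * ∑ j, z j)
      = σ⁻¹ * (2 * π) ^ (-(N : ℝ) / 2) * ∏ n, Real.exp (-(z n)^2/2) := by
  set S : ℝ := ∑ j, z j with hS
  have hsum1 : (∑ n : Fin N, (z n + (σ-1)/N * S)) = S + N * ((σ-1)/N) * S := by
    rw [Finset.sum_add_distrib, Finset.sum_const, Finset.card_univ, Fintype.card_fin,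
      nsmul_eq_mul, ← hS]
    ring
  have hsum2 : (∑ n : Fin N, (z n + (σ-1)/N * S)^2)
      = (∑ n, (z n)^2) + (2*((σ-1)/N)*S) * S + N * (((σ-1)/N)*S)^2 := by
    have hp : ∀ n : Fin N, (z n + (σ-1)/N * S)^2
        = (z n)^2 + (2*((σ-1)/N)*S) * z n + (((σ-1)/N)*S)^2 := fun n => by ring
    rw [Finset.sum_congr rfl fun n _ => hp n, Finset.sum_add_distrib, Finset.sum_add_distrib,
      ← Finset.mul_sum, Finset.sum_const, Finset.card_univ, Fintype.card_fin, nsmul_eq_mul, ← hS]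
  rw [pdensity_exp hN hσ]
  rw [show (∏ n : Fin N, Real.exp (-(z n)^2/2)) = Real.exp (∑ n, -(z n)^2/2) from
    (Real.exp_sum _ _).symm]
  congr 1
  rw [hsum1, hsum2]
  have hz : (∑ n : Fin N, -(z n)^2/2) = -(∑ n, (z n)^2)/2 := by
    rw [← Finset.sum_div, Finset.sum_neg_distrib]
  rw [hz]
  congr 1
  field_simp
  ring


noncomputable def shiftE (N : ℕ) (σ : ℝ) (hN : (N:ℝ) ≠ 0) (hσ' : σ ≠ 0) :
    (Fin N → ℝ) ≃ₗ[ℝ] (Fin N → ℝ) where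
  toFun z := fun i => z i + (σ-1)/N * ∑ j, z j
  invFun x := fun i => x i + (-((σ-1)/N)/σ) * ∑ j, x j
  map_add' := by
    intro z w; funext i
    simp only [Pi.add_apply, Finset.sum_add_distrib]
    ring
  map_smul' := by
    intro c z; funext i
    simp only [Pi.smul_apply, smul_eq_mul, RingHom.id_apply, ← Finset.mul_sum]
    ring
  left_inv := by
    intro z; funext i
    have hNt : (N:ℝ) * ((σ-1)/N) = σ - 1 := by field_simp
    simp only [Finset.sum_add_distrib, Finset.sum_const, Finset.card_univ, Fintype.card_fin,
      nsmul_eq_mul]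
    rw [show (N:ℝ) * ((σ-1)/N * ∑ j, z j) = (σ-1) * ∑ j, z j from by rw [← mul_assoc, hNt]]
    field_simp
    ring
  right_inv := by
    intro x; funext i
    have hNt : (N:ℝ) * ((σ-1)/N) = σ - 1 := by field_simp
    simp only [Finset.sum_add_distrib, Finset.sum_const, Finset.card_univ, Fintype.card_fin,
      nsmul_eq_mul]
    rw [show (N:ℝ) * (-((σ-1)/N)/σ * ∑ j, x j) = (1-σ)/σ * ∑ j, x j from by
      rw [show (N:ℝ) * (-((σ-1)/N)/σ * ∑ j, x j)
          = ((N:ℝ)*((σ-1)/N)) * (-(∑ j, x j)/σ) from by ring, hNt]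
      ring]
    field_simp
    ring

lemma shiftE_det {N : ℕ} {σ : ℝ} (hN : (N:ℝ) ≠ 0) (hσ' : σ ≠ 0) :
    LinearMap.det (shiftE N σ hN hσ' : (Fin N → ℝ) →ₗ[ℝ] (Fin N → ℝ)) = σ := by
  have hmat : LinearMap.toMatrix' (shiftE N σ hN hσ' : (Fin N → ℝ) →ₗ[ℝ] (Fin N → ℝ))
      = 1 + Matrix.replicateCol Unit (fun _ => (σ-1)/N) * Matrix.replicateRow Unit (fun _ => (1:ℝ)) := by
    ext i j
    rw [LinearMap.toMatrix'_apply]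
    show ((Pi.single j (1:ℝ) : Fin N → ℝ) i
        + (σ-1)/N * ∑ j', (Pi.single j (1:ℝ) : Fin N → ℝ) j') = _
    simp [Matrix.one_apply, Matrix.mul_apply, Matrix.replicateCol_apply, Matrix.replicateRow_apply,
      Finset.sum_ite_eq', eq_comm, Pi.single_apply]
  rw [← LinearMap.det_toMatrix', hmat, Matrix.det_one_add_replicateCol_mul_replicateRow]
  simp only [dotProduct, one_mul, Finset.sum_const, Finset.card_univ, Fintype.card_fin,
    nsmul_eq_mul]
  field_simp
  ring

lemma change_var {N : ℕ} {σ : ℝ} (hN : (N:ℝ) ≠ 0) (hσ : 0 < σ) (f : (Fin N → ℝ) → ℝ) :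
    ∫ x : Fin N → ℝ, f x = σ * ∫ z : Fin N → ℝ, f (fun i => z i + (σ-1)/N * ∑ j, z j) := by
  have hσ' : σ ≠ 0 := ne_of_gt hσ
  let e := shiftE N σ hN hσ'
  have hdet : LinearMap.det (e : (Fin N → ℝ) →ₗ[ℝ] (Fin N → ℝ)) = σ := shiftE_det hN hσ'
  have hmap : Measure.map (⇑(e : (Fin N → ℝ) →ₗ[ℝ] (Fin N → ℝ))) volume
      = ENNReal.ofReal σ⁻¹ • volume := by
    rw [Real.map_linearMap_volume_pi_eq_smul_volume_pi (by rw [hdet]; exact hσ'), hdet,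
      abs_of_pos (inv_pos.mpr hσ)]
  let ee : (Fin N → ℝ) ≃ᵐ (Fin N → ℝ) :=
    (shiftE N σ hN hσ').toContinuousLinearEquiv.toHomeomorph.toMeasurableEquiv
  have hco : (⇑ee : (Fin N → ℝ) → (Fin N → ℝ))
      = ⇑(e : (Fin N → ℝ) →ₗ[ℝ] (Fin N → ℝ)) := rfl
  have h1 : ∫ z, f (ee z) = ∫ y, f y ∂(Measure.map (⇑ee) volume) :=
    (MeasureTheory.integral_map_equiv ee f).symm
  rw [hco] at h1
  rw [hmap, integral_smul_measure, ENNReal.toReal_ofReal (inv_nonneg.mpr hσ.le),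
    smul_eq_mul] at h1
  have h3 : (fun z : Fin N → ℝ => f ((e : (Fin N → ℝ) →ₗ[ℝ] (Fin N → ℝ)) z))
      = fun z => f (fun i => z i + (σ-1)/N * ∑ j, z j) := rfl
  rw [show (∫ z, f ((e : (Fin N → ℝ) →ₗ[ℝ] (Fin N → ℝ)) z))
      = ∫ z : Fin N → ℝ, f (fun i => z i + (σ-1)/N * ∑ j, z j) from by rw [h3]] at h1
  rw [h1]
  field_simp


/-- Second moments of `p_{N,σ}`: `∫ x_k x_l p_{N,σ} = 1 + (σ²-1)/N` if `k = l`, and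
`(σ²-1)/N` if `k ≠ l`. -/
theorem pdensity_second_moments (N : ℕ) (hN : 2 ≤ N) (σ : ℝ) (hσ : 0 < σ) (k l : Fin N) :
    (k = l → ∫ x : Fin N → ℝ, x k * x l * pdensity N σ x = 1 + (σ ^ 2 - 1) / (N : ℝ)) ∧
    (k ≠ l → ∫ x : Fin N → ℝ, x k * x l * pdensity N σ x = (σ ^ 2 - 1) / (N : ℝ)) := by
  have hNpos : (0:ℝ) < N := by exact_mod_cast Nat.lt_of_lt_of_le (by norm_num) hN
  have hN0 : (N:ℝ) ≠ 0 := ne_of_gt hNpos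
  have hσ' : σ ≠ 0 := ne_of_gt hσ
  set t : ℝ := (σ-1)/N with ht
  have hmain : ∫ x : Fin N → ℝ, x k * x l * pdensity N σ x
      = (if k = l then 1 else 0) + (σ ^ 2 - 1) / (N : ℝ) := by
    rw [change_var hN0 hσ (fun x => x k * x l * pdensity N σ x)]
    have hfun : (fun z : Fin N → ℝ => (fun x : Fin N → ℝ => x k * x l * pdensity N σ x)
          (fun i => z i + (σ-1)/N * ∑ j, z j))
        = fun z : Fin N → ℝ => (σ⁻¹ * (2 * π) ^ (-(N : ℝ) / 2)) *
            ((z k + t * ∑ j, z j) * (z l + t * ∑ j, z j) * ∏ n, Real.exp (-(z n)^2/2)) := by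
      funext z
      show (z k + (σ-1)/N * ∑ j, z j) * (z l + (σ-1)/N * ∑ j, z j)
          * pdensity N σ (fun i => z i + (σ-1)/N * ∑ j, z j) = _
      rw [pdensity_comp hN0 hσ' z, ← ht]
      ring
    rw [hfun, integral_const_mul]
    -- expand the integrand into moment pieces
    have hintegrand : (fun z : Fin N → ℝ => (z k + t * ∑ j, z j) * (z l + t * ∑ j, z j)
          * ∏ n, Real.exp (-(z n)^2/2))
        = fun z : Fin N → ℝ => z k * z l * ∏ n, Real.exp (-(z n)^2/2)
            + (t * ∑ m, (z k * z m * ∏ n, Real.exp (-(z n)^2/2))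
            + (t * ∑ m, (z l * z m * ∏ n, Real.exp (-(z n)^2/2))
            + t^2 * ∑ m, ∑ m', (z m * z m' * ∏ n, Real.exp (-(z n)^2/2)))) := by
      funext z
      have hs1 : ∀ c : ℝ, (∑ m : Fin N, (c * z m * ∏ n, Real.exp (-(z n)^2/2)))
          = c * (∑ m, z m) * ∏ n, Real.exp (-(z n)^2/2) := by
        intro c
        have hp : ∀ m : Fin N, c * z m * (∏ n, Real.exp (-(z n)^2/2))
            = z m * (c * ∏ n, Real.exp (-(z n)^2/2)) := fun m => by ring
        rw [Finset.sum_congr rfl fun m _ => hp m, ← Finset.sum_mul]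
        ring
      have hs2 : (∑ m : Fin N, ∑ m', (z m * z m' * ∏ n, Real.exp (-(z n)^2/2)))
          = (∑ m, z m) * (∑ m, z m) * ∏ n, Real.exp (-(z n)^2/2) := by
        rw [Finset.sum_congr rfl fun m _ => hs1 (z m)]
        have hp : ∀ m : Fin N, z m * (∑ j, z j) * (∏ n, Real.exp (-(z n)^2/2))
            = z m * ((∑ j, z j) * ∏ n, Real.exp (-(z n)^2/2)) := fun m => by ring
        rw [Finset.sum_congr rfl fun m _ => hp m, ← Finset.sum_mul]
        ring
      rw [hs1 (z k), hs1 (z l), hs2]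
      ring
    rw [hintegrand]
    have IA := integrable_G (N := N) k l
    have IB : Integrable (fun z : Fin N → ℝ =>
        t * ∑ m, (z k * z m * ∏ n, Real.exp (-(z n)^2/2))) :=
      (integrable_finset_sum _ (fun m _ => integrable_G k m)).const_mul t
    have IC : Integrable (fun z : Fin N → ℝ =>
        t * ∑ m, (z l * z m * ∏ n, Real.exp (-(z n)^2/2))) :=
      (integrable_finset_sum _ (fun m _ => integrable_G l m)).const_mul t
    have ID : Integrable (fun z : Fin N → ℝ =>
        t^2 * ∑ m, ∑ m', (z m * z m' * ∏ n, Real.exp (-(z n)^2/2))) :=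
      (integrable_finset_sum _ (fun m _ =>
        integrable_finset_sum _ (fun m' _ => integrable_G m m'))).const_mul (t^2)
    have ICD : Integrable (fun z : Fin N → ℝ =>
        t * ∑ m, (z l * z m * ∏ n, Real.exp (-(z n)^2/2))
          + t^2 * ∑ m, ∑ m', (z m * z m' * ∏ n, Real.exp (-(z n)^2/2))) volume := IC.add ID
    have IBCD : Integrable (fun z : Fin N → ℝ =>
        t * ∑ m, (z k * z m * ∏ n, Real.exp (-(z n)^2/2))
          + (t * ∑ m, (z l * z m * ∏ n, Real.exp (-(z n)^2/2))
          + t^2 * ∑ m, ∑ m', (z m * z m' * ∏ n, Real.exp (-(z n)^2/2)))) volume := IB.add ICD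
    rw [integral_add IA IBCD, integral_add IB ICD, integral_add IC ID,
      integral_const_mul, integral_const_mul, integral_const_mul,
      integral_finset_sum _ (fun m _ => integrable_G k m),
      integral_finset_sum _ (fun m _ => integrable_G l m),
      integral_finset_sum _ (fun m _ =>
        integrable_finset_sum _ (fun m' _ => integrable_G m m'))]
    have hdbl : ∀ m : Fin N, (∫ z : Fin N → ℝ,
        ∑ m', (z m * z m' * ∏ n, Real.exp (-(z n)^2/2)))
        = ∑ m' : Fin N, if m = m' then Real.sqrt (2*π) ^ N else 0 := by
      intro m
      rw [integral_finset_sum _ (fun m' _ => integrable_G m m')]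
      exact Finset.sum_congr rfl fun m' _ => integral_G m m'
    rw [integral_G k l,
      Finset.sum_congr rfl (fun m (_ : m ∈ Finset.univ) => integral_G k m),
      Finset.sum_congr rfl (fun m (_ : m ∈ Finset.univ) => integral_G l m),
      Finset.sum_congr rfl (fun m (_ : m ∈ Finset.univ) => hdbl m)]
    simp only [Finset.sum_ite_eq, Finset.sum_ite_eq', Finset.mem_univ, if_true,
      Finset.sum_const, Finset.card_univ, Fintype.card_fin, nsmul_eq_mul]
    have hC : (2*π) ^ (-(N:ℝ)/2) * Real.sqrt (2*π) ^ N = 1 := by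
      have h2π : (0:ℝ) < 2*π := by positivity
      rw [Real.sqrt_eq_rpow, ← Real.rpow_natCast ((2*π) ^ ((1:ℝ)/(2:ℝ))) N,
        ← Real.rpow_mul h2π.le, ← Real.rpow_add h2π]
      rw [show -(N:ℝ)/2 + 1/2 * N = 0 from by ring, Real.rpow_zero]
    by_cases hkl : k = l
    · rw [if_pos hkl, if_pos hkl]
      calc σ * (σ⁻¹ * (2*π) ^ (-(N:ℝ)/2) * (Real.sqrt (2*π) ^ N
            + (t * Real.sqrt (2*π) ^ N + (t * Real.sqrt (2*π) ^ N
            + t^2 * ((N:ℝ) * Real.sqrt (2*π) ^ N)))))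
          = (σ * σ⁻¹) * ((2*π) ^ (-(N:ℝ)/2) * Real.sqrt (2*π) ^ N)
              * (1 + 2*t + (N:ℝ)*t^2) := by ring
        _ = 1 + 2*t + (N:ℝ)*t^2 := by
            rw [hC, mul_inv_cancel₀ hσ']; ring
        _ = 1 + (σ^2-1)/(N:ℝ) := by
            rw [ht]; field_simp; ring
    · rw [if_neg hkl, if_neg hkl]
      calc σ * (σ⁻¹ * (2*π) ^ (-(N:ℝ)/2) * (0
            + (t * Real.sqrt (2*π) ^ N + (t * Real.sqrt (2*π) ^ N
            + t^2 * ((N:ℝ) * Real.sqrt (2*π) ^ N)))))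
          = (σ * σ⁻¹) * ((2*π) ^ (-(N:ℝ)/2) * Real.sqrt (2*π) ^ N)
              * (2*t + (N:ℝ)*t^2) := by ring
        _ = 2*t + (N:ℝ)*t^2 := by
            rw [hC, mul_inv_cancel₀ hσ']; ring
        _ = (σ^2-1)/(N:ℝ) := by
            rw [ht]; field_simp; ring
        _ = 0 + (σ^2-1)/(N:ℝ) := (zero_add _).symm
  constructor
  · intro h; rw [hmain, if_pos h]
  · intro h; rw [hmain, if_neg h]; ring
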